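/- Let F and G be nonempty finite sets of affine functions from ℝ to ℝ, and let H = { f ∘ g : f ∈ F, g ∈ G } be the set of all compositions. Then for every x ∈ ℝ, the upper envelope of H satisfies H_↑(x) = max{ F_↑(G_↓(x)), F_↑(G_↑(x)) }, where F_↑, G_↑ denote pointwise maxima over F, G respectively and G_↓ denotes the pointwise minimum over G. -/

import Mathlib

/-- if `F`, `G` are nonempty finite sets of affine functions and
`H = {f ∘ g | f ∈ F, g ∈ G}`, then for all `x`,
`H_↑(x) = max (F_↑(G_↓(x))) (F_↑(G_↑(x)))`. -/
theorem upper_envelope_comp (F G H : Finset (ℝ → ℝ))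
    (hF : F.Nonempty) (hG : G.Nonempty) (hH : H.Nonempty)
    (hFAff : ∀ f ∈ F, ∃ a b : ℝ, ∀ x : ℝ, f x = a * x + b)
    (hGAff : ∀ g ∈ G, ∃ a b : ℝ, ∀ x : ℝ, g x = a * x + b)
    (hHmem : ∀ h : ℝ → ℝ, h ∈ H ↔ ∃ f ∈ F, ∃ g ∈ G, h = f ∘ g) :
    ∀ x : ℝ,
      H.sup' hH (fun h => h x) =
        max (F.sup' hF (fun f => f (G.inf' hG (fun g => g x))))
            (F.sup' hF (fun f => f (G.sup' hG (fun g => g x)))) := by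
  intro x
  set lo := G.inf' hG (fun g => g x) with hlo
  set hi := G.sup' hG (fun g => g x) with hhi
  apply le_antisymm
  · apply Finset.sup'_le
    intro h hh
    obtain ⟨f, hf, g, hg, rfl⟩ := (hHmem h).1 hh
    obtain ⟨a, b, hab⟩ := hFAff f hf
    have hlog : lo ≤ g x := Finset.inf'_le _ hg
    have hghi : g x ≤ hi := Finset.le_sup' (fun g => g x) hg
    simp only [Function.comp_apply]
    rcases le_or_gt 0 a with ha | ha
    · calc f (g x) = a * g x + b := hab _
        _ ≤ a * hi + b := by nlinarith
        _ = f hi := (hab _).symm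
        _ ≤ F.sup' hF (fun f => f hi) := Finset.le_sup' (fun u : ℝ → ℝ => u _) hf
        _ ≤ _ := le_max_right _ _
    · calc f (g x) = a * g x + b := hab _
        _ ≤ a * lo + b := by nlinarith
        _ = f lo := (hab _).symm
        _ ≤ F.sup' hF (fun f => f lo) := Finset.le_sup' (fun u : ℝ → ℝ => u _) hf
        _ ≤ _ := le_max_left _ _
  · apply max_le
    · apply Finset.sup'_le
      intro f hf
      obtain ⟨g, hg, hgeq⟩ := Finset.exists_mem_eq_inf' hG (fun g => g x)
      have : f ∘ g ∈ H := (hHmem _).2 ⟨f, hf, g, hg, rfl⟩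
      have := Finset.le_sup' (fun h => h x) this
      rw [Function.comp_apply, ← hgeq] at this
      exact this
    · apply Finset.sup'_le
      intro f hf
      obtain ⟨g, hg, hgeq⟩ := Finset.exists_mem_eq_sup' hG (fun g => g x)
      have : f ∘ g ∈ H := (hHmem _).2 ⟨f, hf, g, hg, rfl⟩
      have := Finset.le_sup' (fun h => h x) this
      rw [Function.comp_apply, ← hgeq] at this
      exact this
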